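/- Let G be a graph whose edge set is partitioned into matchings M_1, …, M_t satisfying the ordered (ORS) property: for every i, the subgraph of G induced by the vertices covered by M_i contains no edge of M_j for any j > i. Let k ≥ 1 and s be integers, and let a ∈ [t]^k with Σ_{i=1}^k a_i = s. Then M_a is an induced matching in H_s: every edge of H_s both of whose endpoints are covered by M_a belongs to M_a. Equivalently, if (U, V) is an edge of H_s whose endpoints are matched by M_a, then f(U_i, V_i) = a_i for all i ∈ [k]. -/

import Mathlib

open Finset

/-- Given a simple graph `G` whose edges are labelled by `f : Sym2 V → Fin t`
(the label `i : Fin t` standing for the matching index `i + 1 ∈ [t]`), the graph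
`H_s` on `V(G)^k`: `U` and `W` are adjacent iff `(U i, W i)` is an edge of `G` for
every `i` and the labels of these edges (as elements of `[t] = {1, …, t}`) sum to `s`. -/
def Hgraph {V : Type*} (G : SimpleGraph V) {t : ℕ} (f : Sym2 V → Fin t)
    (k : ℕ) [NeZero k] (s : ℕ) : SimpleGraph (Fin k → V) where
  Adj U W := (∀ i, G.Adj (U i) (W i)) ∧ (∑ i, (((f s(U i, W i) : ℕ)) + 1)) = s
  symm := by
    constructor
    rintro U W ⟨h1, h2⟩
    refine ⟨fun i => (h1 i).symm, ?_⟩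
    have e : ∀ i : Fin k, f s(W i, U i) = f s(U i, W i) := by
      intro i; rw [Sym2.eq_swap]
    calc ∑ i, (((f s(W i, U i) : ℕ)) + 1)
        = ∑ i, (((f s(U i, W i) : ℕ)) + 1) := by simp [e]
      _ = s := h2
  loopless := by
    constructor
    rintro U ⟨h1, -⟩
    exact G.loopless.irrefl (U 0) (h1 0)

/-- The pair `(U, W)` is an edge of `H_s` lying in `M_a`, i.e. the `i`-th coordinate
edge `(U i, W i)` lies in the matching with index `a i` for every `i`. -/
def MemMa {V : Type*} (G : SimpleGraph V) {t : ℕ} (f : Sym2 V → Fin t)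
    (k : ℕ) [NeZero k] (s : ℕ) (a : Fin k → Fin t) (U W : Fin k → V) : Prop :=
  (Hgraph G f k s).Adj U W ∧ ∀ i, f s(U i, W i) = a i

/-- If the matchings `M 0, …, M (t-1)` partition the edge set of `G` and satisfy the
ordered (ORS) property — for `i < j` no edge of `M j` has both endpoints covered by
`M i` — then each `M_a` is an *induced* matching of `H_s`: any edge `(U, W)` of `H_s`
whose two endpoints are matched by `M_a` satisfies `f (U i, W i) = a i` for every `i`
(hence belongs to `M_a`). -/
theorem Ma_is_induced_matching {V : Type*} [Fintype V] [DecidableEq V]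
    (G : SimpleGraph V) (t : ℕ) (M : Fin t → Finset (Sym2 V))
    (hsub : ∀ i, ↑(M i) ⊆ G.edgeSet)
    (hmatch : ∀ i, ∀ e ∈ M i, ∀ e' ∈ M i, e ≠ e' → ∀ v : V, v ∈ e → v ∉ e')
    (hdisj : ∀ i j, i ≠ j → Disjoint (M i) (M j))
    (hcover : ∀ e ∈ G.edgeSet, ∃ i, e ∈ M i)
    (hORS : ∀ i j : Fin t, i < j → ∀ e ∈ M j, ¬ (∀ v ∈ e, ∃ e' ∈ M i, v ∈ e'))
    (f : Sym2 V → Fin t) (hf : ∀ e ∈ G.edgeSet, e ∈ M (f e))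
    (k : ℕ) [NeZero k] (s : ℕ)
    (a : Fin k → Fin t) (ha : (∑ i, ((a i : ℕ) + 1)) = s)
    (U W : Fin k → V) (hUW : (Hgraph G f k s).Adj U W)
    (hU : ∃ X, MemMa G f k s a U X) (hW : ∃ X, MemMa G f k s a W X) :
    ∀ i, f s(U i, W i) = a i := by
  obtain ⟨X, hX⟩ := hU
  obtain ⟨Y, hY⟩ := hW
  have hle : ∀ i, (f s(U i, W i) : ℕ) ≤ (a i : ℕ) := by
    intro i
    by_contra h
    push_neg at h
    have hj : a i < f s(U i, W i) := h
    have hedge : s(U i, W i) ∈ G.edgeSet := (hUW.1 i)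
    have hmem : s(U i, W i) ∈ M (f s(U i, W i)) := hf _ hedge
    refine hORS (a i) (f s(U i, W i)) hj _ hmem ?_
    intro v hv
    rw [Sym2.mem_iff] at hv
    rcases hv with rfl | rfl
    · refine ⟨s(U i, X i), ?_, ?_⟩
      · have := hf s(U i, X i) (hX.1.1 i)
        rwa [hX.2 i] at this
      · exact Sym2.mem_mk_left _ _
    · refine ⟨s(W i, Y i), ?_, ?_⟩
      · have := hf s(W i, Y i) (hY.1.1 i)
        rwa [hY.2 i] at this
      · exact Sym2.mem_mk_left _ _
  have hsum : ∑ i, ((f s(U i, W i) : ℕ) + 1) = ∑ i, ((a i : ℕ) + 1) := by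
    rw [hUW.2, ha]
  have heq : ∀ i ∈ Finset.univ, ((f s(U i, W i) : ℕ) + 1) = ((a i : ℕ) + 1) := by
    rw [← Finset.sum_eq_sum_iff_of_le (fun i _ => by have := hle i; omega)]
    exact hsum
  intro i
  have := heq i (Finset.mem_univ i)
  exact Fin.ext (by omega)
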